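/- Let κ₀, θ∞ ∈ ℂ and set α = 1 + 2θ∞ − κ₀ and β = −2κ₀². Let U ⊆ ℂ be a nonempty open connected set and let q, p : U → ℂ be differentiable functions with q(t) ≠ 0 for all t ∈ U that solve the Takasaki Hamiltonian system for P_IV with parameters α, β. Define f(t) = (q(t)/2)² and g(t) = t/2 + 2κ₀/q(t)² + p(t)/(2q(t)) + q(t)²/16. Then f, g are differentiable and solve the Okamoto Hamiltonian system for P_IV with parameters κ₀, θ∞ on U. -/

import Mathlib

open Complex

set_option maxHeartbeats 1000000 in
/-- the algebraic change of variables `f = (q/2)²`,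
`g = t/2 + 2κ₀/q² + p/(2q) + q²/16` maps solutions of the Takasaki Hamiltonian system
for P_IV with parameters `α = 1 + 2θ∞ − κ₀`, `β = −2κ₀²` to solutions of the Okamoto
Hamiltonian system for P_IV with parameters `κ₀, θoo`. -/
theorem takasaki_to_okamoto_PIV
    (κ₀ θoo α β : ℂ)
    (hα : α = 1 + 2 * θoo - κ₀) (hβ : β = -2 * κ₀ ^ 2)
    (U : Set ℂ)
    (hUo : IsOpen U) (hUne : U.Nonempty) (hUc : IsPreconnected U)
    (q p : ℂ → ℂ)
    (hq0 : ∀ t ∈ U, q t ≠ 0)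
    (hq : ∀ t ∈ U, HasDerivAt q (p t) t)
    (hp : ∀ t ∈ U, HasDerivAt p
      ((1 / 2) * (3 * (q t / 2) ^ 5 + 8 * t * (q t / 2) ^ 3 + 4 * (t ^ 2 - α) * (q t / 2)
        + 2 * β / (q t / 2) ^ 3)) t)
    (f g : ℂ → ℂ)
    (hf_def : ∀ t, f t = (q t / 2) ^ 2)
    (hg_def : ∀ t, g t = t / 2 + 2 * κ₀ / (q t) ^ 2 + p t / (2 * q t) + (q t) ^ 2 / 16) :
    ∀ t ∈ U,
      HasDerivAt f (4 * f t * g t - (f t) ^ 2 - 2 * t * f t - 2 * κ₀) t ∧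
      HasDerivAt g (-2 * (g t) ^ 2 + 2 * f t * g t + 2 * t * g t - θoo) t := by
  have hfe : f = fun s => (q s / 2) ^ 2 := funext hf_def
  have hge : g = fun s => s / 2 + 2 * κ₀ / (q s) ^ 2 + p s / (2 * q s) + (q s) ^ 2 / 16 :=
    funext hg_def
  intro t ht
  have hq0t := hq0 t ht
  have hq2 : (q t) ^ 2 ≠ 0 := pow_ne_zero _ hq0t
  have h2q : (2 : ℂ) * q t ≠ 0 := by simp [hq0t]
  have hqt := hq t ht
  have hpt := hp t ht
  constructor
  · have hd : HasDerivAt f (2 * (q t / 2) ^ 1 * (p t / 2)) t := by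
      rw [hfe]; exact (hqt.div_const 2).pow 2
    convert hd using 1
    rw [hf_def, hg_def]
    field_simp
    ring_nf
  · have hd : HasDerivAt g
        (1 / 2 + (0 * (q t) ^ 2 - 2 * κ₀ * (2 * (q t) ^ 1 * p t)) / ((q t) ^ 2) ^ 2
          + ((1 / 2) * (3 * (q t / 2) ^ 5 + 8 * t * (q t / 2) ^ 3 + 4 * (t ^ 2 - α) * (q t / 2)
              + 2 * β / (q t / 2) ^ 3) * (2 * q t) - p t * (2 * p t)) / (2 * q t) ^ 2
          + 2 * (q t) ^ 1 * p t / 16) t := by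
      rw [hge]
      exact ((((hasDerivAt_id t).div_const 2).add
        ((hasDerivAt_const t (2 * κ₀)).div (hqt.pow 2) hq2)).add
        (hpt.div (hqt.const_mul 2) h2q)).add ((hqt.pow 2).div_const 16)
    convert hd using 1
    rw [hf_def, hg_def, hα, hβ]
    simp only [div_eq_mul_inv, mul_inv_rev, inv_inv, ← inv_pow]
    linear_combination
      ((1:ℂ)/2 + θoo - t ^ 2 / 2 + 4 * (q t)⁻¹ ^ 3 * p t * κ₀ + 8 * (q t)⁻¹ ^ 4 * κ₀ ^ 2
        + q t * p t / 8 + q t * (q t)⁻¹ / 2 + q t * (q t)⁻¹ * θoo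
        - q t * (q t)⁻¹ * t ^ 2 / 2 - q t ^ 2 * t / 4 - q t ^ 3 * (q t)⁻¹ * t / 4
        - 3 * q t ^ 4 / 128 - 3 * q t ^ 5 * (q t)⁻¹ / 128) * (mul_inv_cancel₀ hq0t)
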